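/- Let G be a topological group, λ a cardinal with index set I_λ, and B_λ(G) = (I_λ × G × I_λ) ∪ {0} the Brandt λ-extension of G with multiplication (α,a,β)(γ,b,δ) = (α, ab, δ) if β = γ and = 0 otherwise, and 0 absorbing. Suppose B_λ(G) carries a topology making it a topological inverse semigroup such that the restriction of the topology to (α, G, α) ∪ {0} makes (α,G,α) homeomorphic to G. Then for all indices α, β, γ, δ ∈ I_λ, the map (α,x,β) ↦ (γ, x, δ) is a homeomorphism from the H-class (α,G,β) onto the H-class (γ,G,δ), and the map (α,x,α) ↦ (γ,x,γ) is a topological group isomorphism of the maximal subgroups (α,G,α) and (γ,G,γ). -/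

import Mathlib

/-- Multiplication of the Brandt `λ`-extension `B_λ(G) = (I × G × I) ∪ {0}`, with
`none` playing the role of the zero. -/
def brandtMul {I G : Type*} [Mul G] [DecidableEq I] :
    Option (I × G × I) → Option (I × G × I) → Option (I × G × I)
  | some (a, g, b), some (c, h, d) => if b = c then some (a, g * h, d) else none
  | _, _ => none

/-- Inversion of the Brandt `λ`-extension: `(α,g,β)⁻¹ = (β,g⁻¹,α)` and `0⁻¹ = 0`. -/
def brandtInv {I G : Type*} [Inv G] : Option (I × G × I) → Option (I × G × I)
  | some (a, g, b) => some (b, g⁻¹, a)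
  | none => none

/-- The non-zero `H`-class `(α, G, β)` of `B_λ(G)`. -/
def Hcl {I : Type*} (G : Type*) (α β : I) : Set (Option (I × G × I)) :=
  {x | ∃ g : G, x = some (α, g, β)}

/-- The translation map `x ↦ (γ,1,α)·x·(β,1,δ)` of `B_λ(G)`. -/
def phi {I G : Type*} [Group G] [DecidableEq I] (γ δ α β : I) (x : Option (I × G × I)) :
    Option (I × G × I) :=
  brandtMul (brandtMul (some (γ, 1, α)) x) (some (β, 1, δ))


lemma phi_some {I G : Type*} [Group G] [DecidableEq I] (γ δ α β : I) (g : G) :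
    phi γ δ α β (some (α, g, β)) = some (γ, g, δ) := by
  simp [phi, brandtMul]

lemma phi_cont {I G : Type*} [Group G] [DecidableEq I]
    [TopologicalSpace (Option (I × G × I))]
    (hmul : Continuous fun p : Option (I × G × I) × Option (I × G × I) =>
      brandtMul p.1 p.2) (γ δ α β : I) :
    Continuous (phi (I := I) (G := G) γ δ α β) := by
  unfold phi
  exact hmul.comp (((hmul.comp (continuous_const.prodMk continuous_id))).prodMk
    continuous_const)

lemma phi_mem {I G : Type*} [Group G] [DecidableEq I] (γ δ α β : I)
    (x : Option (I × G × I)) (hx : x ∈ Hcl G α β) : phi γ δ α β x ∈ Hcl G γ δ := by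
  obtain ⟨g, rfl⟩ := hx
  exact ⟨g, (phi_some γ δ α β g).symm ▸ rfl⟩

def phiEquiv {I G : Type*} [Group G] [DecidableEq I] (γ δ α β : I) :
    ↥(Hcl G α β) ≃ ↥(Hcl G γ δ) where
  toFun x := ⟨phi γ δ α β x.1, phi_mem γ δ α β x.1 x.2⟩
  invFun y := ⟨phi α β γ δ y.1, phi_mem α β γ δ y.1 y.2⟩
  left_inv x := by
    obtain ⟨g, hg⟩ := x.2
    exact Subtype.ext (by simp [hg, phi_some])
  right_inv y := by
    obtain ⟨g, hg⟩ := y.2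
    exact Subtype.ext (by simp [hg, phi_some])

def phiHomeo {I G : Type*} [Group G] [DecidableEq I]
    [TopologicalSpace (Option (I × G × I))]
    (hmul : Continuous fun p : Option (I × G × I) × Option (I × G × I) =>
      brandtMul p.1 p.2) (γ δ α β : I) :
    ↥(Hcl G α β) ≃ₜ ↥(Hcl G γ δ) where
  toEquiv := phiEquiv γ δ α β
  continuous_toFun :=
    Continuous.subtype_mk ((phi_cont hmul γ δ α β).comp continuous_subtype_val) _
  continuous_invFun :=
    Continuous.subtype_mk ((phi_cont hmul α β γ δ).comp continuous_subtype_val) _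

/-- If a topological Brandt `λ`-extension `B_λ(G)` of a topological group
`G` is a topological inverse semigroup whose topology restricts on a maximal subgroup
`(α₀, G, α₀)` to the topology of `G`, then for all `α, β, γ, δ` the map
`(α,x,β) ↦ (γ,x,δ)` is a homeomorphism of the `H`-class `(α,G,β)` onto `(γ,G,δ)`, and
`(α,x,α) ↦ (γ,x,γ)` is a topological group isomorphism of `(α,G,α)` onto `(γ,G,γ)`. -/
theorem stmt_5 {I G : Type*} [Group G] [DecidableEq I] [TopologicalSpace G]
    [IsTopologicalGroup G] [TopologicalSpace (Option (I × G × I))]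
    [T2Space (Option (I × G × I))]
    (hmul : Continuous fun p : Option (I × G × I) × Option (I × G × I) =>
      brandtMul p.1 p.2)
    (hinv : Continuous (brandtInv (I := I) (G := G)))
    (hrestr : ∃ α₀ : I,
      Topology.IsEmbedding fun g : G => (some (α₀, g, α₀) : Option (I × G × I)))
    (α β γ δ : I) :
    Set.MapsTo (phi γ δ α β) (Hcl G α β) (Hcl G γ δ) ∧
    (∃ h : ↥(Hcl G α β) ≃ₜ ↥(Hcl G γ δ),
      ∀ x : ↥(Hcl G α β), (h x : Option (I × G × I)) = phi γ δ α β ↑x) ∧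
    (∃ h : ↥(Hcl G α α) ≃ₜ ↥(Hcl G γ γ),
      (∀ x : ↥(Hcl G α α), (h x : Option (I × G × I)) = phi γ γ α α ↑x) ∧
      ∀ x y : Option (I × G × I), x ∈ Hcl G α α → y ∈ Hcl G α α →
        phi γ γ α α (brandtMul x y) = brandtMul (phi γ γ α α x) (phi γ γ α α y)) := by
  refine ⟨?_, ⟨phiHomeo hmul γ δ α β, fun x => rfl⟩,
    ⟨phiHomeo hmul γ γ α α, fun x => rfl, ?_⟩⟩
  · rintro x ⟨g, rfl⟩
    exact ⟨g, phi_some γ δ α β g⟩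
  · rintro x y ⟨g, rfl⟩ ⟨h, rfl⟩
    simp [phi_some, brandtMul]
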